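/- (Sinkhorn scaling) Let K ∈ ℝ^{n×m} be a matrix with strictly positive entries and let p ∈ ℝⁿ and q ∈ ℝᵐ be probability vectors with strictly positive entries (so Σ_i p_i = Σ_j q_j = 1). Then there exist vectors u ∈ ℝⁿ and v ∈ ℝᵐ with strictly positive entries such that the matrix P defined by P_{ij} = u_i K_{ij} v_j satisfies Σ_j P_{ij} = p_i for all i and Σ_i P_{ij} = q_j for all j, i.e. P ∈ Π(p,q). -/

import Mathlib

open Finset

private lemma sink_aux_bound {K₀ w₀ a w x : ℝ} (hKa : K₀ ≤ a) (hK0 : 0 < K₀)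
    (hw : w₀ ≤ w) (hw1 : w ≤ 1) (hw0 : 0 < w₀) :
    w₀ * |x| - 4 / K₀ ≤ a * Real.exp x - w * x := by
  rcases le_or_gt 0 x with hx | hx
  · rw [abs_of_nonneg hx]
    have h1 : x / 2 + 1 ≤ Real.exp (x / 2) := Real.add_one_le_exp _
    have h2 : Real.exp x = Real.exp (x / 2) ^ 2 := by
      rw [← Real.exp_nat_mul]; ring_nf
    have h3 : (x / 2 + 1) ^ 2 ≤ Real.exp x := by
      rw [h2]
      have : 0 ≤ x / 2 + 1 := by linarith
      exact pow_le_pow_left₀ this h1 2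
    have h4 : K₀ * Real.exp x ≤ a * Real.exp x :=
      mul_le_mul_of_nonneg_right hKa (Real.exp_pos x).le
    have hd : K₀ * (4 / K₀) = 4 := by field_simp
    have e2 : K₀ * x ^ 2 - 8 * x + 4 * (4 / K₀) = K₀ * (x - 4 / K₀) ^ 2 := by
      have h : K₀ * (x - 4 / K₀) ^ 2
          = K₀ * x ^ 2 - 2 * (K₀ * (4 / K₀)) * x + (K₀ * (4 / K₀)) * (4 / K₀) := by ring
      rw [h, hd]; ring
    have e3 : 0 ≤ K₀ * x ^ 2 - 8 * x + 4 * (4 / K₀) := by rw [e2]; positivity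
    have h6 : K₀ * (x / 2 + 1) ^ 2 ≤ a * Real.exp x :=
      le_trans (mul_le_mul_of_nonneg_left h3 hK0.le) h4
    have h8 : 0 ≤ K₀ * x := mul_nonneg hK0.le hx
    have h9 : w * x + w₀ * x ≤ 2 * x := by nlinarith
    linarith [h6, e3, h8, h9, hK0.le]
  · rw [abs_of_neg hx]
    have h1 : 0 < a * Real.exp x := mul_pos (lt_of_lt_of_le hK0 hKa) (Real.exp_pos x)
    have h5 : 0 < 4 / K₀ := by positivity
    nlinarith [mul_le_mul_of_nonneg_right hw (neg_nonneg.mpr hx.le)]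

private lemma sink_hasDerivAt_sum_exp₁ {ι : Type*} (s : Finset ι) (c b : ι → ℝ) (t : ℝ) :
    HasDerivAt (fun t => ∑ k ∈ s, c k * Real.exp (t + b k))
      (∑ k ∈ s, c k * Real.exp (t + b k)) t := by
  have := HasDerivAt.fun_sum (fun k (_ : k ∈ s) =>
    (((hasDerivAt_id t).add_const (b k)).exp.const_mul (c k)))
  simpa using this

private lemma sink_hasDerivAt_sum_exp₂ {ι : Type*} (s : Finset ι) (c b : ι → ℝ) (t : ℝ) :
    HasDerivAt (fun t => ∑ k ∈ s, c k * Real.exp (b k + t))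
      (∑ k ∈ s, c k * Real.exp (b k + t)) t := by
  have := HasDerivAt.fun_sum (fun k (_ : k ∈ s) =>
    ((((hasDerivAt_id t).const_add (b k))).exp.const_mul (c k)))
  simpa using this

private noncomputable def sG {n m : ℕ} (K : Matrix (Fin n) (Fin m) ℝ)
    (p : Fin n → ℝ) (q : Fin m → ℝ) (x : (Fin n → ℝ) × (Fin m → ℝ)) : ℝ :=
  (∑ i, ∑ j, K i j * Real.exp (x.1 i + x.2 j)) - (∑ i, p i * x.1 i)
    - (∑ j, q j * x.2 j) + (∑ i, x.1 i) ^ 2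

private lemma sG_cont {n m : ℕ} (K : Matrix (Fin n) (Fin m) ℝ)
    (p : Fin n → ℝ) (q : Fin m → ℝ) : Continuous (sG K p q) := by
  unfold sG
  apply Continuous.add
  apply Continuous.sub
  apply Continuous.sub
  · exact continuous_finset_sum _ fun i _ => continuous_finset_sum _ fun j _ =>
      (continuous_const.mul (Real.continuous_exp.comp
        (((continuous_apply i).comp continuous_fst).add
          ((continuous_apply j).comp continuous_snd))))
  · exact continuous_finset_sum _ fun i _ =>
      continuous_const.mul ((continuous_apply i).comp continuous_fst)
  · exact continuous_finset_sum _ fun j _ =>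
      continuous_const.mul ((continuous_apply j).comp continuous_snd)
  · exact (continuous_finset_sum _ fun i _ =>
      (continuous_apply i).comp continuous_fst).pow 2

private lemma sG_split {n m : ℕ} (K : Matrix (Fin n) (Fin m) ℝ)
    (p : Fin n → ℝ) (q : Fin m → ℝ)
    (hp_sum : ∑ i, p i = 1) (hq_sum : ∑ j, q j = 1)
    (x : (Fin n → ℝ) × (Fin m → ℝ)) :
    sG K p q x = (∑ i, ∑ j, (K i j * Real.exp (x.1 i + x.2 j)
        - (p i * q j) * (x.1 i + x.2 j))) + (∑ i, x.1 i) ^ 2 := by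
  have key : ∑ i, ∑ j, (p i * q j) * (x.1 i + x.2 j)
      = (∑ i, p i * x.1 i) + (∑ j, q j * x.2 j) := by
    have hin : ∀ i, ∑ j, (p i * q j) * (x.1 i + x.2 j)
        = p i * x.1 i + p i * (∑ j, q j * x.2 j) := by
      intro i
      have h1 : ∑ j, (p i * q j) * (x.1 i + x.2 j)
          = ∑ j, ((p i * x.1 i) * q j + p i * (q j * x.2 j)) :=
        Finset.sum_congr rfl fun j _ => by ring
      rw [h1, Finset.sum_add_distrib, ← Finset.mul_sum, ← Finset.mul_sum, hq_sum, mul_one]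
    rw [Finset.sum_congr rfl fun i _ => hin i, Finset.sum_add_distrib,
      ← Finset.sum_mul, hp_sum, one_mul]
  have h2 : ∑ i, ∑ j, (K i j * Real.exp (x.1 i + x.2 j) - (p i * q j) * (x.1 i + x.2 j))
      = (∑ i, ∑ j, K i j * Real.exp (x.1 i + x.2 j))
        - ∑ i, ∑ j, (p i * q j) * (x.1 i + x.2 j) := by
    rw [← Finset.sum_sub_distrib]
    exact Finset.sum_congr rfl fun i _ => by rw [← Finset.sum_sub_distrib]
  rw [h2, key]; unfold sG; ring

set_option maxHeartbeats 1000000 in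
/-- **Sinkhorn scaling theorem.** For a strictly positive matrix `K` and strictly positive
probability vectors `p` and `q`, there exist strictly positive vectors `u` and `v` such that
the matrix `P_{ij} = u_i K_{ij} v_j` has row sums `p` and column sums `q`,
i.e. `P ∈ Π(p,q)`. -/
theorem sinkhorn_scaling {n m : ℕ}
    (K : Matrix (Fin n) (Fin m) ℝ) (hK : ∀ i j, 0 < K i j)
    (p : Fin n → ℝ) (q : Fin m → ℝ)
    (hp_pos : ∀ i, 0 < p i) (hq_pos : ∀ j, 0 < q j)
    (hp_sum : ∑ i, p i = 1) (hq_sum : ∑ j, q j = 1) :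
    ∃ (u : Fin n → ℝ) (v : Fin m → ℝ), (∀ i, 0 < u i) ∧ (∀ j, 0 < v j) ∧
      (∀ i, ∑ j, u i * K i j * v j = p i) ∧
      (∀ j, ∑ i, u i * K i j * v j = q j) := by
  have hn : 0 < n := by
    rcases Nat.eq_zero_or_pos n with h | h
    · subst h; simp at hp_sum
    · exact h
  have hm : 0 < m := by
    rcases Nat.eq_zero_or_pos m with h | h
    · subst h; simp at hq_sum
    · exact h
  have i₀ : Fin n := ⟨0, hn⟩
  have j₀ : Fin m := ⟨0, hm⟩
  -- constants
  obtain ⟨IJ, -, hIJ⟩ := Finset.exists_min_image (Finset.univ ×ˢ Finset.univ)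
    (fun ij => K ij.1 ij.2) ⟨(i₀, j₀), by simp⟩
  set K₀ := K IJ.1 IJ.2 with hK₀def
  have hK₀pos : 0 < K₀ := hK IJ.1 IJ.2
  have hK₀le : ∀ i j, K₀ ≤ K i j := fun i j => hIJ (i, j) (by simp)
  obtain ⟨ip, -, hip⟩ := Finset.exists_min_image Finset.univ p ⟨i₀, by simp⟩
  obtain ⟨jq, -, hjq⟩ := Finset.exists_min_image Finset.univ q ⟨j₀, by simp⟩
  set w₀ := p ip * q jq with hw₀def
  have hw₀pos : 0 < w₀ := mul_pos (hp_pos ip) (hq_pos jq)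
  have hw₀le : ∀ i j, w₀ ≤ p i * q j := fun i j =>
    mul_le_mul (hip i (mem_univ i)) (hjq j (mem_univ j)) (hq_pos jq).le (hp_pos i).le
  have hp1 : ∀ i, p i ≤ 1 := fun i => hp_sum ▸
    Finset.single_le_sum (fun k _ => (hp_pos k).le) (mem_univ i)
  have hq1 : ∀ j, q j ≤ 1 := fun j => hq_sum ▸
    Finset.single_le_sum (fun k _ => (hq_pos k).le) (mem_univ j)
  have hwle1 : ∀ i j, p i * q j ≤ 1 := fun i j =>
    mul_le_one₀ (hp1 i) (hq_pos j).le (hq1 j)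
  set G := sG K p q with hGdef
  -- term-wise lower bound, with one distinguished term
  have hsum_lb : ∀ (x : (Fin n → ℝ) × (Fin m → ℝ)) (I : Fin n) (J : Fin m),
      w₀ * |x.1 I + x.2 J| - (n * m + 1) * (4 / K₀) + (∑ i, x.1 i) ^ 2 ≤ G x := by
    intro x I J
    rw [hGdef, sG_split K p q hp_sum hq_sum x]
    have hT : ∀ i j, w₀ * |x.1 i + x.2 j| - 4 / K₀
        ≤ K i j * Real.exp (x.1 i + x.2 j) - (p i * q j) * (x.1 i + x.2 j) :=
      fun i j => sink_aux_bound (hK₀le i j) hK₀pos (hw₀le i j) (hwle1 i j) hw₀pos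
    have hTlb : ∀ i j, -(4 / K₀)
        ≤ K i j * Real.exp (x.1 i + x.2 j) - (p i * q j) * (x.1 i + x.2 j) := by
      intro i j
      have := hT i j
      have h0 : 0 ≤ w₀ * |x.1 i + x.2 j| := mul_nonneg hw₀pos.le (abs_nonneg _)
      linarith
    set T : Fin n × Fin m → ℝ := fun ij =>
      K ij.1 ij.2 * Real.exp (x.1 ij.1 + x.2 ij.2)
        - (p ij.1 * q ij.2) * (x.1 ij.1 + x.2 ij.2) with hTdef
    have hprod : ∑ i, ∑ j, (K i j * Real.exp (x.1 i + x.2 j)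
        - (p i * q j) * (x.1 i + x.2 j)) = ∑ ij ∈ Finset.univ ×ˢ Finset.univ, T ij := by
      rw [Finset.sum_product]
    rw [hprod]
    rw [← Finset.add_sum_erase _ T (by simp : (I, J) ∈ Finset.univ ×ˢ Finset.univ)]
    have h1 : ∀ ij ∈ (Finset.univ ×ˢ Finset.univ).erase (I, J), -(4 / K₀) ≤ T ij :=
      fun ij _ => hTlb ij.1 ij.2
    have h2 : ∑ ij ∈ (Finset.univ ×ˢ Finset.univ).erase (I, J), (-(4 / K₀))
        ≤ ∑ ij ∈ (Finset.univ ×ˢ Finset.univ).erase (I, J), T ij :=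
      Finset.sum_le_sum h1
    rw [Finset.sum_const, nsmul_eq_mul] at h2
    have hcard : (((Finset.univ ×ˢ Finset.univ).erase ((I, J) : Fin n × Fin m)).card : ℝ)
        ≤ (n * m : ℝ) := by
      have := Finset.card_le_card (Finset.erase_subset (I, J) (Finset.univ ×ˢ Finset.univ))
      have hc : (Finset.univ ×ˢ Finset.univ : Finset (Fin n × Fin m)).card = n * m := by
        simp [Finset.card_univ]
      rw [hc] at this
      exact_mod_cast this
    have h3 : 0 ≤ 4 / K₀ := by positivity
    have h4 := hT I J
    have h5 : -((n * m : ℝ)) * (4 / K₀)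
        ≤ (((Finset.univ ×ˢ Finset.univ).erase ((I, J) : Fin n × Fin m)).card : ℝ) * (-(4 / K₀)) := by
      nlinarith [hcard, h3]
    push_cast
    nlinarith [h2, h4, h5]
  -- Q and the radius
  set c := G 0 with hcdef
  clear_value c
  set Q := c + (n * m + 1) * (4 / K₀) with hQdef
  clear_value Q
  have hQ0 : 0 ≤ Q := by
    have h := hsum_lb 0 i₀ j₀
    simp only [Prod.fst_zero, Prod.snd_zero, Pi.zero_apply, add_zero, abs_zero,
      mul_zero, Finset.sum_const_zero, zero_add] at h
    norm_num at h
    rw [hQdef, hcdef]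
    linarith
  set D := Q / w₀ with hDdef
  clear_value D
  have hD0 : 0 ≤ D := by rw [hDdef]; exact div_nonneg hQ0 hw₀pos.le
  set R := (2 * (n : ℝ) + 2) * D + Q + 2 with hRdef
  clear_value R
  have hR0 : 0 ≤ R := by
    rw [hRdef]
    have : (0:ℝ) ≤ 2 * (n:ℝ) + 2 := by positivity
    nlinarith
  -- sublevel bounds
  have hsub : ∀ x : (Fin n → ℝ) × (Fin m → ℝ), G x ≤ c →
      (∀ i, |x.1 i| ≤ R) ∧ (∀ j, |x.2 j| ≤ R) := by
    intro x hx
    have hDb : ∀ i j, |x.1 i + x.2 j| ≤ D := by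
      intro i j
      have h1 := hsum_lb x i j
      have h2 : w₀ * |x.1 i + x.2 j| ≤ Q := by
        rw [hQdef]
        have h3 := sq_nonneg (∑ i, x.1 i)
        linarith
      rw [hDdef]
      exact (le_div_iff₀ hw₀pos).mpr (by linarith [h2, mul_comm w₀ |x.1 i + x.2 j|])
    have hs2 : (∑ i, x.1 i) ^ 2 ≤ Q := by
      have h1 := hsum_lb x i₀ j₀
      have h2 := mul_nonneg hw₀pos.le (abs_nonneg (x.1 i₀ + x.2 j₀))
      rw [hQdef]
      linarith
    have hs : |∑ i, x.1 i| ≤ Q + 1 := by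
      nlinarith [sq_abs (∑ i, x.1 i), abs_nonneg (∑ i, x.1 i),
        sq_nonneg (|∑ i, x.1 i| - 1)]
    have hα : ∀ i, |x.1 i| ≤ 2 * (n : ℝ) * D + Q + 1 := by
      intro i
      have hdiff : ∀ k, |x.1 i - x.1 k| ≤ 2 * D := by
        intro k
        have e : x.1 i - x.1 k = (x.1 i + x.2 j₀) - (x.1 k + x.2 j₀) := by ring
        rw [e]
        calc |(x.1 i + x.2 j₀) - (x.1 k + x.2 j₀)|
            ≤ |x.1 i + x.2 j₀| + |x.1 k + x.2 j₀| := abs_sub _ _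
          _ ≤ 2 * D := by linarith [hDb i j₀, hDb k j₀]
      have h3 : (n : ℝ) * x.1 i - (∑ k, x.1 k) = ∑ k, (x.1 i - x.1 k) := by
        rw [Finset.sum_sub_distrib, Finset.sum_const, Finset.card_univ, Fintype.card_fin,
          nsmul_eq_mul]
      have h4 : |(n : ℝ) * x.1 i - ∑ k, x.1 k| ≤ (n : ℝ) * (2 * D) := by
        rw [h3]
        refine le_trans (Finset.abs_sum_le_sum_abs _ _) ?_
        calc ∑ k, |x.1 i - x.1 k| ≤ ∑ _k : Fin n, 2 * D :=
              Finset.sum_le_sum fun k _ => hdiff k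
          _ = (n : ℝ) * (2 * D) := by
              rw [Finset.sum_const, Finset.card_univ, Fintype.card_fin, nsmul_eq_mul]
      have h5 : (n : ℝ) * |x.1 i| ≤ (n : ℝ) * (2 * D) + (Q + 1) := by
        have := abs_sub_abs_le_abs_sub ((n : ℝ) * x.1 i) (∑ k, x.1 k)
        rw [abs_mul, Nat.abs_cast] at this
        linarith [h4, hs, this]
      have hn1 : (1 : ℝ) ≤ (n : ℝ) := by exact_mod_cast hn
      nlinarith [abs_nonneg (x.1 i), h5, hn1]
    refine ⟨fun i => ?_, fun j => ?_⟩
    · have := hα i; rw [hRdef]; nlinarith [hD0]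
    · have h1 := hDb i₀ j
      have h2 := hα i₀
      have h3 : |x.2 j| ≤ |x.1 i₀ + x.2 j| + |x.1 i₀| := by
        have h := abs_sub (x.1 i₀ + x.2 j) (x.1 i₀)
        simpa using h
      rw [hRdef]; linarith
  -- existence of a global minimum
  set lo : (Fin n → ℝ) × (Fin m → ℝ) := (fun _ => -R, fun _ => -R) with hlo
  set hi : (Fin n → ℝ) × (Fin m → ℝ) := (fun _ => R, fun _ => R) with hhi
  have hcomp : IsCompact (Set.Icc lo hi) := isCompact_Icc
  have h0mem : (0 : (Fin n → ℝ) × (Fin m → ℝ)) ∈ Set.Icc lo hi := by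
    constructor
    · exact ⟨fun i => by simpa [hlo] using neg_nonpos_of_nonneg hR0,
        fun j => by simpa [hlo] using neg_nonpos_of_nonneg hR0⟩
    · exact ⟨fun i => by simpa [hhi] using hR0, fun j => by simpa [hhi] using hR0⟩
  obtain ⟨x₀, hx₀mem, hx₀min⟩ :=
    hcomp.exists_isMinOn ⟨0, h0mem⟩ (sG_cont K p q).continuousOn
  have hglobal : ∀ x, G x₀ ≤ G x := by
    intro x
    rcases le_or_gt (G x) c with h | h
    · obtain ⟨h1, h2⟩ := hsub x h
      exact hx₀min ⟨⟨fun i => by simpa [hlo] using (abs_le.mp (h1 i)).1,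
        fun j => by simpa [hlo] using (abs_le.mp (h2 j)).1⟩,
        ⟨fun i => by simpa [hhi] using (abs_le.mp (h1 i)).2,
        fun j => by simpa [hhi] using (abs_le.mp (h2 j)).2⟩⟩
    · have h0 : G x₀ ≤ c := by rw [hcdef]; exact hx₀min h0mem
      exact le_trans h0 h.le
  -- first-order conditions
  set α := x₀.1 with hα0
  set β := x₀.2 with hβ0
  set s := ∑ i, α i with hsdef
  have hrow : ∀ i', (∑ j, K i' j * Real.exp (α i' + β j)) = p i' - 2 * s := by
    intro i'
    set φ : ℝ → ℝ := fun t => G (Function.update α i' t, β) with hφdef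
    have hφmin : IsLocalMin φ (α i') := by
      apply Filter.Eventually.of_forall
      intro t
      have h1 : φ (α i') = G x₀ := by
        rw [hφdef]; simp only [Function.update_eq_self]; rfl
      rw [h1]
      exact hglobal _
    have hφeq : φ = fun t => ((∑ j, K i' j * Real.exp (t + β j))
        + (∑ i ∈ Finset.univ.erase i', ∑ j, K i j * Real.exp (α i + β j))
        - (p i' * t + ∑ i ∈ Finset.univ.erase i', p i * α i)
        - (∑ j, q j * β j))
        + (t + ∑ i ∈ Finset.univ.erase i', α i) ^ 2 := by
      funext t
      show sG K p q (Function.update α i' t, β) = _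
      unfold sG
      rw [← Finset.add_sum_erase Finset.univ
          (fun i => ∑ j, K i j * Real.exp (Function.update α i' t i + β j))
          (Finset.mem_univ i'),
        ← Finset.add_sum_erase Finset.univ
          (fun i => p i * Function.update α i' t i) (Finset.mem_univ i'),
        ← Finset.add_sum_erase Finset.univ
          (fun i => Function.update α i' t i) (Finset.mem_univ i')]
      simp only [Function.update_self]
      have e1 : ∑ i ∈ Finset.univ.erase i', ∑ j, K i j
          * Real.exp (Function.update α i' t i + β j)
          = ∑ i ∈ Finset.univ.erase i', ∑ j, K i j * Real.exp (α i + β j) :=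
        Finset.sum_congr rfl fun i hi => by
          rw [Function.update_of_ne (Finset.ne_of_mem_erase hi)]
      have e2 : ∑ i ∈ Finset.univ.erase i', p i * Function.update α i' t i
          = ∑ i ∈ Finset.univ.erase i', p i * α i :=
        Finset.sum_congr rfl fun i hi => by
          rw [Function.update_of_ne (Finset.ne_of_mem_erase hi)]
      have e3 : ∑ i ∈ Finset.univ.erase i', Function.update α i' t i
          = ∑ i ∈ Finset.univ.erase i', α i :=
        Finset.sum_congr rfl fun i hi => by
          rw [Function.update_of_ne (Finset.ne_of_mem_erase hi)]
      rw [e1, e2, e3]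
    have hd : HasDerivAt φ ((∑ j, K i' j * Real.exp (α i' + β j)) - p i'
        + 2 * (α i' + ∑ i ∈ Finset.univ.erase i', α i)) (α i') := by
      rw [hφeq]
      have h1 := sink_hasDerivAt_sum_exp₁ Finset.univ (fun j => K i' j) β (α i')
      have h2 := (((h1.add_const
          (∑ i ∈ Finset.univ.erase i', ∑ j, K i j * Real.exp (α i + β j))).sub
          (((hasDerivAt_id (α i')).const_mul (p i')).add_const
            (∑ i ∈ Finset.univ.erase i', p i * α i))).sub_const
          (∑ j, q j * β j)).add
          (((hasDerivAt_id (α i')).add_const (∑ i ∈ Finset.univ.erase i', α i)).pow 2)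
      refine h2.congr_deriv ?_
      simp
    have hzero := hφmin.hasDerivAt_eq_zero hd
    have hsum' : α i' + ∑ i ∈ Finset.univ.erase i', α i = s :=
      Finset.add_sum_erase _ _ (Finset.mem_univ i')
    rw [hsum'] at hzero
    linarith [hzero]
  have hcol : ∀ j', (∑ i, K i j' * Real.exp (α i + β j')) = q j' := by
    intro j'
    set φ : ℝ → ℝ := fun t => G (α, Function.update β j' t) with hφdef
    have hφmin : IsLocalMin φ (β j') := by
      apply Filter.Eventually.of_forall
      intro t
      have h1 : φ (β j') = G x₀ := by
        rw [hφdef]; simp only [Function.update_eq_self]; rfl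
      rw [h1]
      exact hglobal _
    have hφeq : φ = fun t => ((∑ i, K i j' * Real.exp (α i + t))
        + (∑ i, ∑ j ∈ Finset.univ.erase j', K i j * Real.exp (α i + β j))
        - (∑ i, p i * α i)
        - (q j' * t + ∑ j ∈ Finset.univ.erase j', q j * β j))
        + s ^ 2 := by
      funext t
      show sG K p q (α, Function.update β j' t) = _
      unfold sG
      have hin : ∀ i, ∑ j, K i j * Real.exp (α i + Function.update β j' t j)
          = K i j' * Real.exp (α i + t)
            + ∑ j ∈ Finset.univ.erase j', K i j * Real.exp (α i + β j) := by
        intro i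
        rw [← Finset.add_sum_erase Finset.univ _ (Finset.mem_univ j'),
          Function.update_self]
        congr 1
        exact Finset.sum_congr rfl fun j hj => by
          rw [Function.update_of_ne (Finset.ne_of_mem_erase hj)]
      rw [Finset.sum_congr rfl fun i _ => hin i, Finset.sum_add_distrib,
        ← Finset.add_sum_erase Finset.univ
          (fun j => q j * Function.update β j' t j) (Finset.mem_univ j'),
        Function.update_self]
      have e2 : ∑ j ∈ Finset.univ.erase j', q j * Function.update β j' t j
          = ∑ j ∈ Finset.univ.erase j', q j * β j :=
        Finset.sum_congr rfl fun j hj => by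
          rw [Function.update_of_ne (Finset.ne_of_mem_erase hj)]
      rw [e2]
    have hd : HasDerivAt φ ((∑ i, K i j' * Real.exp (α i + β j')) - q j') (β j') := by
      rw [hφeq]
      have h1 := sink_hasDerivAt_sum_exp₂ Finset.univ (fun i => K i j') α (β j')
      have h2 := ((((h1.add_const
          (∑ i, ∑ j ∈ Finset.univ.erase j', K i j * Real.exp (α i + β j))).sub_const
          (∑ i, p i * α i)).sub
          (((hasDerivAt_id (β j')).const_mul (q j')).add_const
            (∑ j ∈ Finset.univ.erase j', q j * β j))).add_const (s ^ 2))
      refine h2.congr_deriv ?_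
      simp
    have hzero := hφmin.hasDerivAt_eq_zero hd
    linarith [hzero]
  -- conclude s = 0
  have hs0 : s = 0 := by
    have h1 : ∑ i, ∑ j, K i j * Real.exp (α i + β j) = 1 - 2 * (n : ℝ) * s := by
      rw [Finset.sum_congr rfl fun i _ => hrow i, Finset.sum_sub_distrib, hp_sum,
        Finset.sum_const, Finset.card_univ, Fintype.card_fin, nsmul_eq_mul]
      ring
    have h2 : ∑ j, ∑ i, K i j * Real.exp (α i + β j) = 1 := by
      rw [Finset.sum_congr rfl fun j _ => hcol j, hq_sum]
    rw [Finset.sum_comm] at h1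
    rw [h2] at h1
    have hn' : (0 : ℝ) < (n : ℝ) := by exact_mod_cast hn
    nlinarith [h1]
  refine ⟨fun i => Real.exp (α i), fun j => Real.exp (β j),
    fun i => Real.exp_pos _, fun j => Real.exp_pos _, ?_, ?_⟩
  · intro i
    have h1 : ∑ j, Real.exp (α i) * K i j * Real.exp (β j)
        = ∑ j, K i j * Real.exp (α i + β j) :=
      Finset.sum_congr rfl fun j _ => by rw [Real.exp_add]; ring
    rw [h1, hrow i, hs0]; ring
  · intro j
    have h1 : ∑ i, Real.exp (α i) * K i j * Real.exp (β j)
        = ∑ i, K i j * Real.exp (α i + β j) :=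
      Finset.sum_congr rfl fun i _ => by rw [Real.exp_add]; ring
    rw [h1, hcol j]
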